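/- Let (C, ·) be an HFP-code of length 4n and D₁ the set of codewords with a zero in the first coordinate. Then (C, D₁, u) is a left Hadamard group: for any a ∉ {0, u}, |D₁ ∩ a·D₁| = 2n, and for any a, b ∈ C, |a·D₁ ∩ {b, b·u}| = 1. -/

import Mathlib

/-- The action of a coordinate permutation `σ` on a binary vector:
`(permAct σ v) i = v (σ⁻¹ i)`. -/
def permAct {m : ℕ} (σ : Equiv.Perm (Fin m)) (v : Fin m → ZMod 2) : Fin m → ZMod 2 :=
  fun i => v (σ.symm i)

/-- The propelinear operation `x · y = x + π_x(y)`. -/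
def pmul {m : ℕ} (π : (Fin m → ZMod 2) → Equiv.Perm (Fin m))
    (x y : Fin m → ZMod 2) : Fin m → ZMod 2 :=
  x + permAct (π x) y

/-- Powers with respect to the propelinear operation. -/
def ppow {m : ℕ} (π : (Fin m → ZMod 2) → Equiv.Perm (Fin m))
    (g : Fin m → ZMod 2) : ℕ → Fin m → ZMod 2
  | 0 => 0
  | k + 1 => pmul π g (ppow π g k)

/-- The all-ones vector. -/
def allOnes (m : ℕ) : Fin m → ZMod 2 := fun _ => 1

/-- Let `(C, ·)` be an HFP-code of length `4n` and `D₁` the set of codewords with a zero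
in the first coordinate. Then `(C, D₁, u)` is a left Hadamard group:
`|D₁ ∩ a·D₁| = 2n` for `a ∉ {0, u}` and `|a·D₁ ∩ {b, b·u}| = 1` for all `a, b ∈ C`. -/


def χ : ZMod 2 → ℚ := fun c => if c = 0 then 1 else -1

lemma chi_mul : ∀ a b : ZMod 2, χ a * χ b = χ (a + b) := by
  intro a b
  have h2 : (1 + 1 : ZMod 2) = 0 := by decide
  have hc : ∀ c : ZMod 2, c = 0 ∨ c = 1 := by decide
  rcases hc a with rfl | rfl <;> rcases hc b with rfl | rfl <;> simp [χ, h2, show ¬ ((1 : ZMod 2) = 0) by decide]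

lemma zmod2_ne_zero : ∀ a : ZMod 2, (¬ a = 0 ↔ a = 1) := by decide

lemma sum_chi_finset {α : Type*} [DecidableEq α] (s : Finset α) (f : α → ZMod 2) :
    ∑ x ∈ s, χ (f x) =
      ((s.filter fun x => f x = 0).card : ℚ) - ((s.filter fun x => ¬ f x = 0).card : ℚ) := by
  have h : ∀ x ∈ s, χ (f x) =
      (if f x = 0 then (1:ℚ) else 0) - (if ¬ f x = 0 then (1:ℚ) else 0) := by
    intro x _
    by_cases h : f x = 0 <;> simp [χ, h]
  rw [Finset.sum_congr rfl h, Finset.sum_sub_distrib, Finset.sum_boole, Finset.sum_boole]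

lemma balance (n : ℕ) (hn : 0 < n) (D : Finset (Fin (4*n) → ZMod 2))
    (hDcard : D.card = 4*n) (i0 : Fin (4*n)) (hzero : ∀ x ∈ D, x i0 = 0)

    (hd : ∀ x ∈ D, ∀ y ∈ D, x ≠ y → hammingDist x y = 2*n)
    (j : Fin (4*n)) (hj : j ≠ i0) :
    (D.filter fun x => x j = 0).card = 2*n ∧ (D.filter fun x => x j = 1).card = 2*n := by
  classical
  have hcardD : Fintype.card ↥D = 4*n := by simp [hDcard]
  let e : ↥D ≃ Fin (4*n) := Fintype.equivFinOfCardEq hcardD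
  let H : Matrix (Fin (4*n)) (Fin (4*n)) ℚ :=
    Matrix.of fun k i => χ ((e.symm k : Fin (4*n) → ZMod 2) i)
  -- row orthogonality
  have key : ∀ x ∈ D, ∀ y ∈ D, ∑ i, χ (x i) * χ (y i)
      = (4*n : ℚ) - 2 * (hammingDist x y : ℚ) := by
    intro x hx y hy
    have : ∑ i, χ (x i) * χ (y i) = ∑ i, χ ((fun i => x i + y i) i) :=
      Finset.sum_congr rfl fun i _ => chi_mul _ _
    rw [this, sum_chi_finset]
    have hadd : (Finset.univ.filter fun i => x i + y i = 0).card
        + (Finset.univ.filter fun i => ¬ (x i + y i = 0)).card = 4*n := by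
      rw [Finset.card_filter_add_card_filter_not]; simp
    have hham : (Finset.univ.filter fun i => ¬ (x i + y i = 0)).card = hammingDist x y := by
      rw [hammingDist]
      congr 1
      apply Finset.filter_congr
      intro i _
      have : ∀ a b : ZMod 2, (a + b = 0 ↔ a = b) := by decide
      simp [this (x i) (y i)]
    rw [hham] at hadd ⊢
    have : ((Finset.univ.filter fun i => x i + y i = 0).card : ℚ)
        + (hammingDist x y : ℚ) = 4*n := by exact_mod_cast hadd
    linarith
  have hrow : H * H.transpose = ((4*n : ℚ) • 1) := by
    ext k l
    rw [Matrix.mul_apply]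
    simp only [Matrix.transpose_apply, Matrix.of_apply, H]
    by_cases hkl : k = l
    · subst hkl
      rw [key _ (e.symm k).2 _ (e.symm k).2]
      simp [hammingDist]
    · have hxy : (e.symm k : Fin (4*n) → ZMod 2) ≠ (e.symm l : Fin (4*n) → ZMod 2) := by
        intro h
        exact hkl (by simpa using e.symm.injective (Subtype.coe_injective h))
      rw [key _ (e.symm k).2 _ (e.symm l).2, hd _ (e.symm k).2 _ (e.symm l).2 hxy]
      simp [Matrix.one_apply, hkl]
      push_cast; ring
  -- column orthogonality
  have hc : (4*n : ℚ) ≠ 0 := by positivity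
  have hcol : H.transpose * H = ((4*n : ℚ) • 1) := by
    have h1 : ((4*n:ℚ)⁻¹ • H) * H.transpose = 1 := by
      rw [Matrix.smul_mul, hrow, smul_smul, inv_mul_cancel₀ hc, one_smul]
    have h2 : H.transpose * ((4*n:ℚ)⁻¹ • H) = 1 := mul_eq_one_comm.mp h1
    calc H.transpose * H = (4*n:ℚ) • (H.transpose * ((4*n:ℚ)⁻¹ • H)) := by
          rw [Matrix.mul_smul, smul_smul, mul_inv_cancel₀ hc, one_smul]
      _ = (4*n:ℚ) • 1 := by rw [h2]
  have hentry : ∑ k, H k i0 * H k j = 0 := by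
    have h := congrFun (congrFun hcol i0) j
    rw [Matrix.mul_apply] at h
    simp only [Matrix.transpose_apply] at h
    rw [h]
    simp [Matrix.one_apply, (Ne.symm hj)]
  have hone : ∀ k, H k i0 = 1 := by
    intro k
    have : (e.symm k : Fin (4*n) → ZMod 2) i0 = 0 := hzero _ (e.symm k).2
    simp [H, this, χ]
  have hsum : ∑ x ∈ D, χ (x j) = 0 := by
    have h1 : ∑ k, H k j = 0 := by
      rw [← hentry]
      exact Finset.sum_congr rfl fun k _ => by rw [hone k, one_mul]
    have h2 : ∑ k, H k j = ∑ x : ↥D, χ ((x : Fin (4*n) → ZMod 2) j) :=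
      Equiv.sum_comp e.symm (fun x : ↥D => χ ((x : Fin (4*n) → ZMod 2) j))
    rw [← Finset.sum_coe_sort D (fun x => χ (x j)), ← h2, h1]
  rw [sum_chi_finset] at hsum
  have hadd : (D.filter fun x => x j = 0).card
      + (D.filter fun x => ¬ (x j = 0)).card = 4*n := by
    rw [Finset.card_filter_add_card_filter_not, hDcard]
  have hAB : (D.filter fun x => x j = 0).card = (D.filter fun x => ¬ (x j = 0)).card := by
    exact_mod_cast sub_eq_zero.mp hsum
  have hfil : (D.filter fun x => x j = 1) = (D.filter fun x => ¬ (x j = 0)) := by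
    apply Finset.filter_congr
    intro x _
    simp [zmod2_ne_zero (x j)]
  rw [hfil]
  have harith : ∀ A B : ℕ, A + B = 4*n → A = B → A = 2*n ∧ B = 2*n := by
    clear_value e H
    clear hrow hcol hentry hone hsum hadd hAB hfil e H
    intro A B h1 h2; omega
  exact harith _ _ hadd hAB

lemma zmod2_self_add : ∀ a : ZMod 2, a + a = 0 := by decide
lemma zmod2_solve : ∀ a b : ZMod 2, (a + b = 0 ↔ b = a) := by decide
lemma zmod2_cases : ∀ a : ZMod 2, a = 0 ∨ a = 1 := by decide
lemma zmod2_one_ne_zero : (1 : ZMod 2) ≠ 0 := by decide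

lemma permAct_injective {m : ℕ} (σ : Equiv.Perm (Fin m)) :
    Function.Injective (permAct σ) := by
  intro v w h
  funext i
  have := congrFun h (σ i)
  simpa [permAct] using this

lemma pmul_injective {m : ℕ} (π : (Fin m → ZMod 2) → Equiv.Perm (Fin m))
    (a : Fin m → ZMod 2) : Function.Injective (pmul π a) := by
  intro v w h
  exact permAct_injective (π a) (add_left_cancel h)

lemma pmul_apply {m : ℕ} (π : (Fin m → ZMod 2) → Equiv.Perm (Fin m))
    (a x : Fin m → ZMod 2) (i : Fin m) :
    pmul π a x i = a i + x ((π a).symm i) := rfl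

lemma pmul_add_allOnes {m : ℕ} (π : (Fin m → ZMod 2) → Equiv.Perm (Fin m))
    (a x : Fin m → ZMod 2) :
    pmul π a (x + allOnes m) = pmul π a x + allOnes m := by
  funext i
  show a i + (x + allOnes m) ((π a).symm i) = (a i + x ((π a).symm i)) + 1
  show a i + (x ((π a).symm i) + 1) = (a i + x ((π a).symm i)) + 1
  ring

lemma pmul_allOnes_right {m : ℕ} (π : (Fin m → ZMod 2) → Equiv.Perm (Fin m))
    (b : Fin m → ZMod 2) :
    pmul π b (allOnes m) = b + allOnes m := rfl

theorem stmt_6 (n : ℕ) (hn : 0 < n) (C : Finset (Fin (4*n) → ZMod 2))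
    (π : (Fin (4*n) → ZMod 2) → Equiv.Perm (Fin (4*n)))
    (h0 : (0 : Fin (4*n) → ZMod 2) ∈ C) (hu : allOnes (4*n) ∈ C)
    (hcard : C.card = 8*n)
    (hclosed : ∀ x ∈ C, ∀ y ∈ C, pmul π x y ∈ C)
    (hhom : ∀ x ∈ C, ∀ y ∈ C, π (pmul π x y) = π x * π y)
    (hπ0 : π 0 = 1) (hπu : π (allOnes (4*n)) = 1)
    (hfree : ∀ x ∈ C, x ≠ 0 → x ≠ allOnes (4*n) → ∀ i, π x i ≠ i)
    (hdist : ∀ x ∈ C, ∀ y ∈ C, x ≠ y → x ≠ y + allOnes (4*n) → hammingDist x y = 2*n)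
    (D₁ : Finset (Fin (4*n) → ZMod 2))
    (hD₁ : D₁ = C.filter (fun x => x ⟨0, by omega⟩ = 0)) :
    (∀ a ∈ C, a ≠ 0 → a ≠ allOnes (4*n) →
      (D₁ ∩ D₁.image (pmul π a)).card = 2*n) ∧
    (∀ a ∈ C, ∀ b ∈ C,
      (D₁.image (pmul π a) ∩ ({b, pmul π b (allOnes (4*n))} : Finset _)).card = 1) := by
  classical
  set u := allOnes (4*n) with hu'
  set i0 : Fin (4*n) := ⟨0, by omega⟩ with hi0
  clear_value u i0
  have hui : ∀ i, u i = 1 := fun i => by rw [hu']; rfl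
  -- closure under adding allOnes
  have hCu : ∀ x ∈ C, x + u ∈ C := by
    intro x hx
    have h := hclosed u hu x hx
    have heq : pmul π u x = x + u := by
      funext i
      rw [pmul_apply, hπu]
      show u i + x i = x i + u i
      ring
    rwa [heq] at h
  have huu : ∀ x : Fin (4*n) → ZMod 2, x + u + u = x := by
    intro x; funext i
    show x i + u i + u i = x i
    rw [hui]
    have : ∀ a : ZMod 2, a + 1 + 1 = a := by decide
    exact this _
  -- membership in D₁
  have hmemD : ∀ x, x ∈ D₁ ↔ x ∈ C ∧ x i0 = 0 := by
    intro x; rw [hD₁, hi0]; exact Finset.mem_filter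
  -- card of D₁
  have hD₁card : D₁.card = 4*n := by
    have hsplit : D₁.card + (C.filter fun x => ¬ x i0 = 0).card = 8*n := by
      rw [hD₁, hi0, Finset.card_filter_add_card_filter_not, hcard]
    have hbijc : D₁.card = (C.filter fun x => ¬ x i0 = 0).card := by
      apply Finset.card_bij (fun x _ => x + u)
      · intro x hx
        rw [hmemD] at hx
        rw [Finset.mem_filter]
        refine ⟨hCu x hx.1, ?_⟩
        show ¬ ((x i0 + u i0) = 0)
        rw [hx.2, hui]
        decide
      · intro x hx y hy h
        have h2 := congrArg (· + u) h
        simpa [huu] using h2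
      · intro y hy
        rw [Finset.mem_filter] at hy
        refine ⟨y + u, ?_, huu y⟩
        rw [hmemD]
        refine ⟨hCu y hy.1, ?_⟩
        show y i0 + u i0 = 0
        rcases zmod2_cases (y i0) with h | h
        · exact absurd h hy.2
        · rw [h, hui]; decide
    have harith : ∀ A B : ℕ, A + B = 8*n → A = B → A = 4*n := by
      intro A B h1 h2
      clear * - h1 h2
      omega
    exact harith _ _ hsplit hbijc
  -- pairwise distance on D₁
  have hDdist : ∀ x ∈ D₁, ∀ y ∈ D₁, x ≠ y → hammingDist x y = 2*n := by
    intro x hx y hy hxy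
    rw [hmemD] at hx hy
    apply hdist x hx.1 y hy.1 hxy
    intro h
    have h1 : x i0 = y i0 + u i0 := congrFun h i0
    rw [hx.2, hy.2, hui] at h1
    exact zmod2_one_ne_zero h1.symm
  have hzeroD : ∀ x ∈ D₁, x i0 = 0 := fun x hx => ((hmemD x).mp hx).2
  have hbal := fun (j : Fin (4*n)) (hj : j ≠ i0) =>
    balance n hn D₁ hD₁card i0 hzeroD hDdist j hj
  constructor
  · -- first part
    intro a ha ha0 hau
    set j : Fin (4*n) := (π a).symm i0 with hj'
    have hjne : j ≠ i0 := by
      intro h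
      have h1 : π a j = i0 := (π a).apply_symm_apply i0
      rw [h] at h1
      exact hfree a ha ha0 hau i0 h1
    have hset : D₁ ∩ D₁.image (pmul π a)
        = (D₁.filter fun x => x j = a i0).image (pmul π a) := by
      ext y
      simp only [Finset.mem_inter, Finset.mem_image, Finset.mem_filter]
      constructor
      · rintro ⟨hyD, x, hxD, rfl⟩
        refine ⟨x, ⟨hxD, ?_⟩, rfl⟩
        have h1 : pmul π a x i0 = 0 := hzeroD _ hyD
        rw [pmul_apply] at h1
        exact (zmod2_solve _ _).mp h1
      · rintro ⟨x, ⟨hxD, hxj⟩, rfl⟩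
        refine ⟨?_, x, hxD, rfl⟩
        rw [hmemD]
        refine ⟨hclosed a ha x ((hmemD x).mp hxD).1, ?_⟩
        rw [pmul_apply]
        have : x ((π a).symm i0) = a i0 := hxj
        rw [this]
        exact zmod2_self_add _
    rw [hset, Finset.card_image_of_injective _ (pmul_injective π a)]
    rcases zmod2_cases (a i0) with h | h
    · rw [Finset.filter_congr (fun x _ => by rw [h] : ∀ x ∈ D₁, x j = a i0 ↔ x j = 0)]
      exact (hbal j hjne).1
    · rw [Finset.filter_congr (fun x _ => by rw [h] : ∀ x ∈ D₁, x j = a i0 ↔ x j = 1)]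
      exact (hbal j hjne).2
  · -- second part
    intro a ha b hb
    have himg : C.image (pmul π a) = C := by
      apply Finset.eq_of_subset_of_card_le
      · intro y hy
        rw [Finset.mem_image] at hy
        obtain ⟨x, hx, rfl⟩ := hy
        exact hclosed a ha x hx
      · rw [Finset.card_image_of_injective _ (pmul_injective π a)]
    obtain ⟨x₀, hx₀C, hx₀⟩ := Finset.mem_image.mp (by rw [himg]; exact hb)
    have hbu : pmul π b u = b + u := by rw [hu']; exact pmul_allOnes_right π b
    have hpau : pmul π a (x₀ + u) = b + u := by
      rw [hu', pmul_add_allOnes, ← hu', hx₀]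
    rw [hbu]
    rcases zmod2_cases (x₀ i0) with h0 | h1
    · -- b ∈ a·D₁, b+u ∉
      have hx₀D : x₀ ∈ D₁ := (hmemD x₀).mpr ⟨hx₀C, h0⟩
      have hbin : b ∈ D₁.image (pmul π a) := Finset.mem_image.mpr ⟨x₀, hx₀D, hx₀⟩
      have hbuout : b + u ∉ D₁.image (pmul π a) := by
        intro hmem
        obtain ⟨y, hyD, hy⟩ := Finset.mem_image.mp hmem
        have hyx : y = x₀ + u := pmul_injective π a (hy.trans hpau.symm)
        have hz := hzeroD y hyD
        rw [hyx] at hz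
        have hz2 : x₀ i0 + u i0 = 0 := hz
        rw [h0, hui] at hz2
        exact zmod2_one_ne_zero (by simpa using hz2)
      have hres : D₁.image (pmul π a) ∩ ({b, b + u} : Finset _) = {b} := by
        ext y
        simp only [Finset.mem_inter, Finset.mem_insert, Finset.mem_singleton]
        constructor
        · rintro ⟨hy1, rfl | rfl⟩
          · rfl
          · exact absurd hy1 hbuout
        · rintro rfl
          exact ⟨hbin, Or.inl rfl⟩
      rw [hres, Finset.card_singleton]
    · -- b+u ∈ a·D₁, b ∉
      have hx₀uD : x₀ + u ∈ D₁ := by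
        rw [hmemD]
        refine ⟨hCu x₀ hx₀C, ?_⟩
        show x₀ i0 + u i0 = 0
        rw [h1, hui]; decide
      have hbuin : b + u ∈ D₁.image (pmul π a) :=
        Finset.mem_image.mpr ⟨x₀ + u, hx₀uD, hpau⟩
      have hbout : b ∉ D₁.image (pmul π a) := by
        intro hmem
        obtain ⟨y, hyD, hy⟩ := Finset.mem_image.mp hmem
        have hyx : y = x₀ := pmul_injective π a (hy.trans hx₀.symm)
        have hz := hzeroD y hyD
        rw [hyx, h1] at hz
        exact zmod2_one_ne_zero hz
      have hres : D₁.image (pmul π a) ∩ ({b, b + u} : Finset _) = {b + u} := by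
        ext y
        simp only [Finset.mem_inter, Finset.mem_insert, Finset.mem_singleton]
        constructor
        · rintro ⟨hy1, rfl | rfl⟩
          · exact absurd hy1 hbout
          · rfl
        · rintro rfl
          exact ⟨hbuin, Or.inr rfl⟩
      rw [hres, Finset.card_singleton]
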